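/- arXiv:1702.01643 — 2 statements merged into one kernel-verified Lean document; each statement's English description precedes it below -/
import Mathlib

section
/- Two cocycles of the form C_S and C_{S'} for integer 3-tensors S, S' differ by a coboundary whenever the total antisymmetrizations of S and S' agree; consequently the cohomology class of C_S depends only on the integer p = (1/6) Σ ε_{jkl} S_{jkl} when S is such that this antisymmetrization is p·ε. -/
/- STATEMENT 4: Cocycles `C_S` and `C_{S'}` for integer 3-tensors `S, S'` differ
by a coboundary whenever the total antisymmetrizations of `S` and `S'` agree;
consequently the cohomology class of `C_S` depends only on the integer
`p = (1/6) Σ ε_{jkl} S_{jkl}` when the antisymmetrization of `S` is `p·ε`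
(i.e. `Asym S = 6p·ε`): in that case `C_S` is cohomologous to the level-`p`
cocycle `exp(2πi p · det[a,n,m])`. -/

noncomputable def CS (S : Fin 3 → Fin 3 → Fin 3 → ℤ)
    (a : Fin 3 → ℝ) (n m : Fin 3 → ℤ) : ℂ :=
  Complex.exp (2 * Real.pi * Complex.I *
    (∑ j : Fin 3, ∑ k : Fin 3, ∑ l : Fin 3, (S j k l : ℝ) * a j * (n k : ℝ) * (m l : ℝ)))

/-- Total antisymmetrization of a 3-index tensor (sum over the 6 permutations
of the index slots, with signs). -/
def Asym (S : Fin 3 → Fin 3 → Fin 3 → ℤ) (j k l : Fin 3) : ℤ :=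
  ∑ σ : Equiv.Perm (Fin 3), (Equiv.Perm.sign σ : ℤ) *
    S (![j, k, l] (σ 0)) (![j, k, l] (σ 1)) (![j, k, l] (σ 2))

/-- Totally antisymmetric ε-tensor with `ε 0 1 2 = 1`. -/
def eps (j k l : Fin 3) : ℤ :=
  (((k : ℤ) - (j : ℤ)) * ((l : ℤ) - (k : ℤ)) * ((l : ℤ) - (j : ℤ))) / 2

/-- Scalar triple product `det[a, n, m]`. -/
noncomputable def trip (a : Fin 3 → ℝ) (n m : Fin 3 → ℤ) : ℝ :=
  a 0 * ((n 1 : ℝ) * (m 2 : ℝ) - (n 2 : ℝ) * (m 1 : ℝ)) +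
  a 1 * ((n 2 : ℝ) * (m 0 : ℝ) - (n 0 : ℝ) * (m 2 : ℝ)) +
  a 2 * ((n 0 : ℝ) * (m 1 : ℝ) - (n 1 : ℝ) * (m 0 : ℝ))


def Bf (x : ℤ) : ℤ := x * (x - 1) / 2

lemma Bf_add (x y : ℤ) : Bf (x + y) = Bf x + Bf y + x * y := by
  have h1 : (2:ℤ) ∣ x*(x-1) := (Int.even_mul_pred_self x).two_dvd
  unfold Bf
  rw [show (x+y)*((x+y)-1) = x*(x-1) + y*(y-1) + x*y*2 by ring,
    Int.add_mul_ediv_right _ _ (by norm_num : (2:ℤ) ≠ 0),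
    Int.add_ediv_of_dvd_left h1]

noncomputable def Qt (T : Fin 3 → Fin 3 → Fin 3 → ℤ) (a : Fin 3 → ℝ) (n : Fin 3 → ℤ) : ℝ :=
    (T 0 0 0 : ℝ) * ((⌊a 0⌋ : ℤ) : ℝ) * a 0 * ((n 0 : ℤ) : ℝ)
    + (T 0 0 1 : ℝ) * ((⌊a 0⌋ : ℤ) : ℝ) * a 0 * ((n 1 : ℤ) : ℝ)
    + (T 0 0 2 : ℝ) * ((⌊a 0⌋ : ℤ) : ℝ) * a 0 * ((n 2 : ℤ) : ℝ)
    + (T 1 1 0 : ℝ) * ((⌊a 1⌋ : ℤ) : ℝ) * a 1 * ((n 0 : ℤ) : ℝ)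
    + (T 1 1 1 : ℝ) * ((⌊a 1⌋ : ℤ) : ℝ) * a 1 * ((n 1 : ℤ) : ℝ)
    + (T 1 1 2 : ℝ) * ((⌊a 1⌋ : ℤ) : ℝ) * a 1 * ((n 2 : ℤ) : ℝ)
    + (T 2 2 0 : ℝ) * ((⌊a 2⌋ : ℤ) : ℝ) * a 2 * ((n 0 : ℤ) : ℝ)
    + (T 2 2 1 : ℝ) * ((⌊a 2⌋ : ℤ) : ℝ) * a 2 * ((n 1 : ℤ) : ℝ)
    + (T 2 2 2 : ℝ) * ((⌊a 2⌋ : ℤ) : ℝ) * a 2 * ((n 2 : ℤ) : ℝ)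
    + -((T 0 1 1 : ℝ) * (a 0 - ((⌊a 0⌋ : ℤ) : ℝ)) * ((Bf (n 1) : ℤ) : ℝ))
    + -((T 0 2 2 : ℝ) * (a 0 - ((⌊a 0⌋ : ℤ) : ℝ)) * ((Bf (n 2) : ℤ) : ℝ))
    + -((T 1 0 0 : ℝ) * (a 1 - ((⌊a 1⌋ : ℤ) : ℝ)) * ((Bf (n 0) : ℤ) : ℝ))
    + -((T 1 2 2 : ℝ) * (a 1 - ((⌊a 1⌋ : ℤ) : ℝ)) * ((Bf (n 2) : ℤ) : ℝ))
    + -((T 2 0 0 : ℝ) * (a 2 - ((⌊a 2⌋ : ℤ) : ℝ)) * ((Bf (n 0) : ℤ) : ℝ))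
    + -((T 2 1 1 : ℝ) * (a 2 - ((⌊a 2⌋ : ℤ) : ℝ)) * ((Bf (n 1) : ℤ) : ℝ))
    + -((T 0 1 0 : ℝ) * (a 0 * ((n 1 : ℤ) : ℝ) * ((n 0 : ℤ) : ℝ) + ((⌊a 0⌋ : ℤ) : ℝ) * a 0 * ((n 1 : ℤ) : ℝ)))
    + -((T 0 2 0 : ℝ) * (a 0 * ((n 2 : ℤ) : ℝ) * ((n 0 : ℤ) : ℝ) + ((⌊a 0⌋ : ℤ) : ℝ) * a 0 * ((n 2 : ℤ) : ℝ)))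
    + -((T 1 0 1 : ℝ) * (a 1 * ((n 0 : ℤ) : ℝ) * ((n 1 : ℤ) : ℝ) + ((⌊a 1⌋ : ℤ) : ℝ) * a 1 * ((n 0 : ℤ) : ℝ)))
    + -((T 1 2 1 : ℝ) * (a 1 * ((n 2 : ℤ) : ℝ) * ((n 1 : ℤ) : ℝ) + ((⌊a 1⌋ : ℤ) : ℝ) * a 1 * ((n 2 : ℤ) : ℝ)))
    + -((T 2 0 2 : ℝ) * (a 2 * ((n 0 : ℤ) : ℝ) * ((n 2 : ℤ) : ℝ) + ((⌊a 2⌋ : ℤ) : ℝ) * a 2 * ((n 0 : ℤ) : ℝ)))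
    + -((T 2 1 2 : ℝ) * (a 2 * ((n 1 : ℤ) : ℝ) * ((n 2 : ℤ) : ℝ) + ((⌊a 2⌋ : ℤ) : ℝ) * a 2 * ((n 1 : ℤ) : ℝ)))
    + ((T 0 2 1 : ℝ) - (T 0 1 2 : ℝ)) * a 0 * a 2 * ((n 1 : ℤ) : ℝ)
    + ((T 1 2 0 : ℝ) - (T 1 0 2 : ℝ)) * a 1 * a 2 * ((n 0 : ℤ) : ℝ)
    + -((T 0 1 2 : ℝ) * a 0 * ((n 1 : ℤ) : ℝ) * ((n 2 : ℤ) : ℝ))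
    + -((T 1 0 2 : ℝ) * a 1 * ((n 0 : ℤ) : ℝ) * ((n 2 : ℤ) : ℝ))
    + -(((T 2 0 1 : ℝ) - (T 0 2 1 : ℝ) + (T 0 1 2 : ℝ)) * a 2 * ((n 0 : ℤ) : ℝ) * ((n 1 : ℤ) : ℝ))

noncomputable def Kt (T : Fin 3 → Fin 3 → Fin 3 → ℤ) (a : Fin 3 → ℝ) (n m : Fin 3 → ℤ) : ℤ :=
    T 0 0 0 * n 0 * (⌊a 0⌋ + n 0) * m 0
    + T 0 0 1 * n 0 * (⌊a 0⌋ + n 0) * m 1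
    + T 0 0 2 * n 0 * (⌊a 0⌋ + n 0) * m 2
    + T 1 1 0 * n 1 * (⌊a 1⌋ + n 1) * m 0
    + T 1 1 1 * n 1 * (⌊a 1⌋ + n 1) * m 1
    + T 1 1 2 * n 1 * (⌊a 1⌋ + n 1) * m 2
    + T 2 2 0 * n 2 * (⌊a 2⌋ + n 2) * m 0
    + T 2 2 1 * n 2 * (⌊a 2⌋ + n 2) * m 1
    + T 2 2 2 * n 2 * (⌊a 2⌋ + n 2) * m 2
    + -(T 0 1 1 * ⌊a 0⌋ * n 1 * m 1)
    + -(T 0 1 0 * (n 0 * m 1 * m 0 + n 0 * (⌊a 0⌋ + n 0) * m 1))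
    + -(T 0 2 2 * ⌊a 0⌋ * n 2 * m 2)
    + -(T 0 2 0 * (n 0 * m 2 * m 0 + n 0 * (⌊a 0⌋ + n 0) * m 2))
    + -(T 1 0 0 * ⌊a 1⌋ * n 0 * m 0)
    + -(T 1 0 1 * (n 1 * m 0 * m 1 + n 1 * (⌊a 1⌋ + n 1) * m 0))
    + -(T 1 2 2 * ⌊a 1⌋ * n 2 * m 2)
    + -(T 1 2 1 * (n 1 * m 2 * m 1 + n 1 * (⌊a 1⌋ + n 1) * m 2))
    + -(T 2 0 0 * ⌊a 2⌋ * n 0 * m 0)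
    + -(T 2 0 2 * (n 2 * m 0 * m 2 + n 2 * (⌊a 2⌋ + n 2) * m 0))
    + -(T 2 1 1 * ⌊a 2⌋ * n 1 * m 1)
    + -(T 2 1 2 * (n 2 * m 1 * m 2 + n 2 * (⌊a 2⌋ + n 2) * m 1))
    + (T 0 2 1 - T 0 1 2) * n 0 * n 2 * m 1
    + (T 1 2 0 - T 1 0 2) * n 1 * n 2 * m 0
    + -(T 0 1 2 * n 0 * m 1 * m 2)
    + -(T 1 0 2 * n 1 * m 0 * m 2)
    + -((T 2 0 1 - T 0 2 1 + T 0 1 2) * n 2 * m 0 * m 1)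

lemma main_ident (T : Fin 3 → Fin 3 → Fin 3 → ℤ)
    (hrel : T 0 1 2 - T 0 2 1 - T 1 0 2 + T 1 2 0 + T 2 0 1 - T 2 1 0 = 0)
    (a : Fin 3 → ℝ) (n m : Fin 3 → ℤ) :
    (∑ j : Fin 3, ∑ k : Fin 3, ∑ l : Fin 3, (T j k l : ℝ) * a j * (n k : ℝ) * (m l : ℝ))
      = Qt T a n + Qt T (fun i => a i + (n i : ℝ)) m - Qt T a (n + m)
        - (Kt T a n m : ℝ) := by
  have hrelR : (T 0 1 2 : ℝ) - T 0 2 1 - T 1 0 2 + T 1 2 0 + T 2 0 1 - T 2 1 0 = 0 := by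
    exact_mod_cast hrel
  simp only [Qt, Kt, Fin.sum_univ_three, Pi.add_apply, Int.floor_add_intCast]
  push_cast [Bf_add]
  linear_combination (-(a 2 * (n 1 : ℝ) * (m 0 : ℝ))) * hrelR

lemma perm3_univ : (Finset.univ : Finset (Equiv.Perm (Fin 3))) =
    {1, Equiv.swap 0 1, Equiv.swap 0 2, Equiv.swap 1 2,
     Equiv.swap 0 1 * Equiv.swap 1 2, Equiv.swap 1 2 * Equiv.swap 0 1} := by decide

lemma asym_012 (S : Fin 3 → Fin 3 → Fin 3 → ℤ) :
    Asym S 0 1 2 = S 0 1 2 - S 0 2 1 - S 1 0 2 + S 1 2 0 + S 2 0 1 - S 2 1 0 := by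
  rw [Asym, perm3_univ]
  rw [Finset.sum_insert (by decide), Finset.sum_insert (by decide),
      Finset.sum_insert (by decide), Finset.sum_insert (by decide),
      Finset.sum_insert (by decide), Finset.sum_singleton]
  simp (config := { decide := true }) [Equiv.swap_apply_def]
  ring

lemma e000 : eps 0 0 0 = 0 := by decide
lemma e001 : eps 0 0 1 = 0 := by decide
lemma e002 : eps 0 0 2 = 0 := by decide
lemma e010 : eps 0 1 0 = 0 := by decide
lemma e011 : eps 0 1 1 = 0 := by decide
lemma e012 : eps 0 1 2 = 1 := by decide
lemma e020 : eps 0 2 0 = 0 := by decide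
lemma e021 : eps 0 2 1 = -1 := by decide
lemma e022 : eps 0 2 2 = 0 := by decide
lemma e100 : eps 1 0 0 = 0 := by decide
lemma e101 : eps 1 0 1 = 0 := by decide
lemma e102 : eps 1 0 2 = -1 := by decide
lemma e110 : eps 1 1 0 = 0 := by decide
lemma e111 : eps 1 1 1 = 0 := by decide
lemma e112 : eps 1 1 2 = 0 := by decide
lemma e120 : eps 1 2 0 = 1 := by decide
lemma e121 : eps 1 2 1 = 0 := by decide
lemma e122 : eps 1 2 2 = 0 := by decide
lemma e200 : eps 2 0 0 = 0 := by decide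
lemma e201 : eps 2 0 1 = 1 := by decide
lemma e202 : eps 2 0 2 = 0 := by decide
lemma e210 : eps 2 1 0 = -1 := by decide
lemma e211 : eps 2 1 1 = 0 := by decide
lemma e212 : eps 2 1 2 = 0 := by decide
lemma e220 : eps 2 2 0 = 0 := by decide
lemma e221 : eps 2 2 1 = 0 := by decide
lemma e222 : eps 2 2 2 = 0 := by decide

lemma key (S S' : Fin 3 → Fin 3 → Fin 3 → ℤ)
    (hrel : S 0 1 2 - S 0 2 1 - S 1 0 2 + S 1 2 0 + S 2 0 1 - S 2 1 0
      = S' 0 1 2 - S' 0 2 1 - S' 1 0 2 + S' 1 2 0 + S' 2 0 1 - S' 2 1 0) :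
    ∃ b : (Fin 3 → ℝ) → (Fin 3 → ℤ) → ℂ,
      (∀ a n, ‖b a n‖ = 1) ∧
      ∀ (a : Fin 3 → ℝ) (n m : Fin 3 → ℤ),
        CS S a n m = CS S' a n m *
          (b a n * b (fun i => a i + (n i : ℝ)) m * (b a (n + m))⁻¹) := by
  refine ⟨fun a n => Complex.exp (2 * Real.pi * Complex.I *
      ((Qt (fun j k l => S j k l - S' j k l) a n : ℝ) : ℂ)), ?_, ?_⟩
  · intro a n
    rw [Complex.norm_exp]
    norm_num
  · intro a n m
    have hrelT : (fun j k l => S j k l - S' j k l) 0 1 2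
        - (fun j k l => S j k l - S' j k l) 0 2 1
        - (fun j k l => S j k l - S' j k l) 1 0 2
        + (fun j k l => S j k l - S' j k l) 1 2 0
        + (fun j k l => S j k l - S' j k l) 2 0 1
        - (fun j k l => S j k l - S' j k l) 2 1 0 = 0 := by
      simp only
      linear_combination hrel
    have hmain := main_ident (fun j k l => S j k l - S' j k l) hrelT a n m
    have hmainC := congrArg (fun r : ℝ => (r : ℂ)) hmain
    simp only [Fin.sum_univ_three] at hmainC
    push_cast at hmainC
    simp only [CS, ← Complex.exp_neg, ← Complex.exp_add]
    rw [Complex.exp_eq_exp_iff_exists_int]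
    refine ⟨-(Kt (fun j k l => S j k l - S' j k l) a n m), ?_⟩
    simp only [Fin.sum_univ_three]
    push_cast
    linear_combination (2 * (Real.pi : ℂ) * Complex.I) * hmainC

lemma CS_eps (p : ℤ) (a : Fin 3 → ℝ) (n m : Fin 3 → ℤ) :
    CS (fun j k l => p * eps j k l) a n m
      = Complex.exp (2 * Real.pi * Complex.I * ((p : ℝ) * trip a n m)) := by
  rw [CS, trip]
  congr 1
  simp only [Fin.sum_univ_three, e000, e001, e002, e010, e011, e012, e020, e021, e022, e100, e101, e102, e110, e111, e112, e120, e121, e122, e200, e201, e202, e210, e211, e212, e220, e221, e222]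
  push_cast
  ring


theorem stmt4 (S S' : Fin 3 → Fin 3 → Fin 3 → ℤ)
    (h : ∀ j k l, Asym S j k l = Asym S' j k l) :
    (∃ b : (Fin 3 → ℝ) → (Fin 3 → ℤ) → ℂ,
      (∀ a n, ‖b a n‖ = 1) ∧
      ∀ (a : Fin 3 → ℝ) (n m : Fin 3 → ℤ),
        CS S a n m = CS S' a n m *
          (b a n * b (fun i => a i + (n i : ℝ)) m * (b a (n + m))⁻¹)) ∧
    ∀ p : ℤ, (∀ j k l, Asym S j k l = 6 * p * eps j k l) →
      ∃ b : (Fin 3 → ℝ) → (Fin 3 → ℤ) → ℂ,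
        (∀ a n, ‖b a n‖ = 1) ∧
        ∀ (a : Fin 3 → ℝ) (n m : Fin 3 → ℤ),
          CS S a n m
            = Complex.exp (2 * Real.pi * Complex.I * ((p : ℝ) * trip a n m)) *
              (b a n * b (fun i => a i + (n i : ℝ)) m * (b a (n + m))⁻¹) := by
  constructor
  · apply key
    have h012 := h 0 1 2
    rw [asym_012, asym_012] at h012
    exact h012
  · intro p hp
    have h6 := hp 0 1 2
    rw [asym_012, e012] at h6
    obtain ⟨b, hb1, hb2⟩ := key S (fun j k l => p * eps j k l)
      (by simp only [e012, e021, e102, e120, e201, e210]; linarith)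
    exact ⟨b, hb1, fun a n m => by rw [hb2 a n m, CS_eps]⟩
end

section
/- Let F(a) = (a·σ)/|a| for a ∈ ℝ³ \ {0}, where σ = (σ₁,σ₂,σ₃) are the Pauli matrices. Then the 2-form (1/8)·tr(F dF ∧ dF) equals (√−1/4) ε_{ijk} (a_i/|a|³) da_j ∧ da_k, the unit monopole curvature form up to the factor √−1. -/
/- STATEMENT 11: With `F(a) = (a·σ)/|a|` (σ the Pauli matrices), the 2-form
`(1/8) tr(F dF ∧ dF)` equals `(√−1/4) ε_{ijk} (a_i/|a|³) da_j ∧ da_k`, the unit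
monopole curvature up to the factor `√−1`.  Encoding: evaluating both 2-forms on
the coordinate vectors `(e_j, e_k)` gives, for all `j, k`,
`(1/8)(tr(F ∂_jF ∂_kF) − tr(F ∂_kF ∂_jF)) = (i/2) Σ_i ε_{ijk} a_i / |a|³`. -/

noncomputable abbrev E3 := EuclideanSpace ℝ (Fin 3)

/-- The Pauli matrices `σ₁, σ₂, σ₃`. -/
noncomputable def pauli : Fin 3 → Matrix (Fin 2) (Fin 2) ℂ :=
  ![!![0, 1; 1, 0], !![0, -Complex.I; Complex.I, 0], !![1, 0; 0, -1]]

/-- `F(a) = (a·σ)/|a|`. -/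
noncomputable def Fmat (a : E3) : Matrix (Fin 2) (Fin 2) ℂ :=
  (‖a‖⁻¹ : ℝ) • ∑ i, ((a i : ℝ) : ℂ) • pauli i

/-- The partial derivative `∂_j F` at `a`, computed entrywise. -/
noncomputable def dFmat (j : Fin 3) (a : E3) : Matrix (Fin 2) (Fin 2) ℂ :=
  Matrix.of fun i k => fderiv ℝ (fun x : E3 => Fmat x i k) a (EuclideanSpace.single j 1)

lemma hasFDerivAt_invNorm (a : E3) (ha : a ≠ 0) :
    HasFDerivAt (fun x : E3 => ‖x‖⁻¹) ((-(‖a‖ ^ 3)⁻¹ : ℝ) • innerSL ℝ a) a := by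
  have hn : ‖a‖ ≠ 0 := norm_ne_zero_iff.mpr ha
  have h1 : HasFDerivAt (fun x : E3 => ‖x‖ ^ 2) (2 • innerSL ℝ a) a :=
    (hasStrictFDerivAt_norm_sq a).hasFDerivAt
  have h2 : HasDerivAt Real.sqrt (1 / (2 * Real.sqrt (‖a‖ ^ 2))) (‖a‖ ^ 2) :=
    Real.hasDerivAt_sqrt (by positivity)
  have h3 : HasFDerivAt (fun x : E3 => ‖x‖) ((‖a‖⁻¹ : ℝ) • innerSL ℝ a) a := by
    have h4 := h2.comp_hasFDerivAt a h1
    simp only [Function.comp_def] at h4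
    have he : (fun x : E3 => Real.sqrt (‖x‖ ^ 2)) = fun x : E3 => ‖x‖ := by
      funext x; rw [Real.sqrt_sq (norm_nonneg x)]
    rw [he] at h4
    refine h4.congr_fderiv ?_
    ext y
    simp [Real.sqrt_sq (norm_nonneg a)]
    field_simp
  have h5 := (hasDerivAt_inv hn).comp_hasFDerivAt a h3
  simp only [Function.comp_def] at h5
  refine h5.congr_fderiv ?_
  ext y
  simp
  ring

/-- The linear map `x ↦ Σ_l x_l (σ_l)_{pq}`. -/
noncomputable def Lent (p q : Fin 2) : E3 →L[ℝ] ℂ :=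
  ∑ l, pauli l p q • (Complex.ofRealCLM.comp (EuclideanSpace.proj l))

lemma Lent_apply (p q : Fin 2) (x : E3) :
    Lent p q x = ∑ l, ((x l : ℝ) : ℂ) * pauli l p q := by
  simp [Lent, mul_comm]

lemma dFmat_apply (a : E3) (ha : a ≠ 0) (j : Fin 3) (p q : Fin 2) :
    dFmat j a p q = (‖a‖⁻¹ : ℂ) * pauli j p q
      - ((a j : ℂ) * ((‖a‖ : ℂ) ^ 3)⁻¹) * ∑ l, ((a l : ℝ) : ℂ) * pauli l p q := by
  have hF : (fun x : E3 => Fmat x p q) = fun x => (‖x‖⁻¹ : ℝ) • Lent p q x := by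
    funext x
    simp only [Fmat, Lent_apply, Matrix.smul_apply, Matrix.sum_apply, smul_eq_mul]
  have hd : HasFDerivAt (fun x : E3 => Fmat x p q)
      ((‖a‖⁻¹ : ℝ) • (Lent p q) +
        (((-(‖a‖ ^ 3)⁻¹ : ℝ) • innerSL ℝ a)).smulRight (Lent p q a)) a := by
    rw [hF]
    exact (hasFDerivAt_invNorm a ha).smul (Lent p q).hasFDerivAt
  have := hd.fderiv
  simp only [dFmat, Matrix.of_apply, this]
  have hinner : (innerSL ℝ a) (EuclideanSpace.single j 1) = a j := by
    simp [EuclideanSpace.inner_single_right, real_inner_comm]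
  have hL : Lent p q (EuclideanSpace.single j 1) = pauli j p q := by
    rw [Lent_apply]
    rw [Fin.sum_univ_three]
    fin_cases j <;> simp [EuclideanSpace.single_apply]
  simp [hinner, hL, Lent_apply, Complex.real_smul]
  ring

lemma Fmat_apply (a : E3) (p q : Fin 2) :
    Fmat a p q = (‖a‖⁻¹ : ℂ) * ∑ l, ((a l : ℝ) : ℂ) * pauli l p q := by
  simp only [Fmat, Matrix.smul_apply, Matrix.sum_apply, smul_eq_mul, Complex.real_smul,
    Complex.ofReal_inv, Finset.mul_sum]

set_option maxHeartbeats 2000000 in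
theorem stmt11 (a : E3) (ha : a ≠ 0) (j k : Fin 3) :
    (1 / 8 : ℂ) * ((Fmat a * dFmat j a * dFmat k a).trace
        - (Fmat a * dFmat k a * dFmat j a).trace)
      = (Complex.I / 2) * (((∑ i, (eps i j k : ℝ) * a i) / ‖a‖ ^ 3 : ℝ) : ℂ) := by
  fin_cases j <;> fin_cases k <;>
    · simp only [Matrix.trace, Matrix.diag, Matrix.mul_apply, Fin.sum_univ_two,
        Fin.sum_univ_three, Fmat_apply, dFmat_apply a ha]
      norm_num [pauli, eps] <;> simp [Matrix.of_apply]
      try push_cast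
      try ring
end
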